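/- Let N ≥ 2, 1 ≤ C < N, and L = N − C + 1. For every p ∈ Δ_N°, H_C(p) = C/N + Σ_{1 ≤ a < b ≤ N} (p_a − p_b)² · J_{ab}^{(C)}(p), where J_{ab}^{(C)}(p) = Σ_{R ⊆ {1,…,N}, {a,b} ⊆ R, |R| ≥ L} (−1)^{|R|−L} binom(|R|−2, |R|−L) / (|R| · p_R). -/

import Mathlib

open Finset

/-- The exact stationary LRU hit rate, given by the residual-subset formula. -/
noncomputable def hitRate (N C : ℕ) (p : Fin N → ℝ) : ℝ :=
  ∑ m ∈ Finset.Icc (N - C + 1) N,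
    (-1 : ℝ) ^ (m - (N - C + 1)) * ((m - 2).choose (m - (N - C + 1)) : ℝ) *
      ∑ R ∈ (Finset.univ : Finset (Fin N)).powersetCard m,
        (∑ i ∈ R, p i ^ 2) / (∑ i ∈ R, p i)

/-- The pair coefficient
`J_{ab}^{(C)}(p) = Σ_{R ⊇ {a,b}, |R| ≥ L} (-1)^{|R|-L} binom(|R|-2,|R|-L) / (|R| p_R)`
with `L = N - C + 1`. -/
noncomputable def Jkernel (N C : ℕ) (a b : Fin N) (p : Fin N → ℝ) : ℝ :=
  ∑ R ∈ (Finset.univ : Finset (Fin N)).powerset.filter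
      (fun R => a ∈ R ∧ b ∈ R ∧ N - C + 1 ≤ R.card),
    (-1 : ℝ) ^ (R.card - (N - C + 1)) *
      ((R.card - 2).choose (R.card - (N - C + 1)) : ℝ) /
      ((R.card : ℝ) * ∑ i ∈ R, p i)

set_option maxRecDepth 20000

lemma key_binom (N : ℕ) : ∀ M r : ℕ, M < N →
    ∑ k ∈ Finset.range (r+1), (-1:ℤ)^k * ((M+k).choose k) * (N.choose (r-k))
      = ((N - M - 1).choose r : ℤ) := by
  intro M
  induction M with
  | zero =>
    intro r
    induction r with
    | zero => intro h; simp
    | succ r ih =>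
      intro hN
      obtain ⟨n, rfl⟩ : ∃ n, N = n + 1 := ⟨N - 1, by omega⟩
      rw [Finset.sum_range_succ']
      have h1 : ∀ k ∈ Finset.range (r+1),
          (-1:ℤ)^(k+1) * (((0+(k+1)).choose (k+1) : ℕ) : ℤ) * (((n+1).choose (r+1-(k+1)) : ℕ) : ℤ)
          = -((-1:ℤ)^k * ((0+k).choose k) * ((n+1).choose (r-k))) := by
        intro k _
        rw [Nat.succ_sub_succ]
        simp only [Nat.zero_add, Nat.choose_self, Nat.cast_one, pow_succ]
        ring
      rw [Finset.sum_congr rfl h1, Finset.sum_neg_distrib, ih (by omega)]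
      have hp : ((n+1).choose (r+1) : ℤ) = n.choose r + n.choose (r+1) := by
        exact_mod_cast congrArg (Nat.cast (R := ℤ)) (Nat.choose_succ_succ n r)
      simp only [pow_zero, Nat.zero_add, Nat.choose_zero_right, Nat.cast_one, one_mul,
        Nat.sub_zero, Nat.add_sub_cancel]
      rw [hp]
      push_cast
      ring
  | succ M ihM =>
    intro r
    induction r with
    | zero => intro h; simp
    | succ r ihr =>
      intro hN
      have hA := ihr (by omega)
      have hD := ihM (r+1) (by omega)
      have h2 : ∑ k ∈ Finset.range (r+2), (-1:ℤ)^k * ((M+k).choose k) * (N.choose (r+1-k))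
          = -(∑ k ∈ Finset.range (r+1), (-1:ℤ)^k * ((M+(k+1)).choose (k+1)) * (N.choose (r-k)))
            + N.choose (r+1) := by
        rw [Finset.sum_range_succ']
        have hpt : ∀ k ∈ Finset.range (r+1),
            (-1:ℤ)^(k+1) * (((M+(k+1)).choose (k+1) : ℕ) : ℤ) * ((N.choose (r+1-(k+1)) : ℕ) : ℤ)
            = -((-1:ℤ)^k * ((M+(k+1)).choose (k+1)) * (N.choose (r-k))) := by
          intro k _
          rw [Nat.succ_sub_succ]
          push_cast
          ring
        rw [Finset.sum_congr rfl hpt, Finset.sum_neg_distrib]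
        simp only [pow_zero, Nat.choose_zero_right, Nat.cast_one, one_mul, Nat.sub_zero,
          Nat.add_zero]
      rw [Finset.sum_range_succ']
      have h1 : ∀ k ∈ Finset.range (r+1),
          (-1:ℤ)^(k+1) * (((M+1+(k+1)).choose (k+1) : ℕ) : ℤ) * ((N.choose (r+1-(k+1)) : ℕ) : ℤ)
          = -((-1:ℤ)^k * ((M+1+k).choose k) * (N.choose (r-k)))
            - ((-1:ℤ)^k * ((M+(k+1)).choose (k+1)) * (N.choose (r-k))) := by
        intro k _
        have hc : (M+1+(k+1)).choose (k+1) = (M+1+k).choose k + (M+1+k).choose (k+1) := by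
          exact Nat.choose_succ_succ (M+1+k) k
        have hc2 : (M+1+k).choose (k+1) = (M+(k+1)).choose (k+1) := by ring_nf
        rw [Nat.succ_sub_succ, hc, hc2]
        push_cast
        ring
      rw [Finset.sum_congr rfl h1, Finset.sum_sub_distrib, Finset.sum_neg_distrib]
      simp only [pow_zero, Nat.choose_zero_right, Nat.cast_one, one_mul, Nat.sub_zero,
        Nat.add_zero]
      have hcast : ((N - M - 1).choose (r+1) : ℤ)
          = (N - (M+1) - 1).choose (r+1) + (N - (M+1) - 1).choose r := by
        rw [show N - M - 1 = (N - (M+1) - 1) + 1 by omega, Nat.choose_succ_succ]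
        push_cast
        ring
      linear_combination -hA - h2 + hD + hcast


lemma sq_pair {N : ℕ} (p : Fin N → ℝ) (R : Finset (Fin N)) :
    (R.card : ℝ) * (∑ i ∈ R, p i ^ 2) =
      (∑ i ∈ R, p i)^2 +
        ∑ ab ∈ (R ×ˢ R).filter (fun ab => ab.1 < ab.2), (p ab.1 - p ab.2)^2 := by
  have full : ∑ a ∈ R, ∑ b ∈ R, (p a - p b)^2
      = 2*((R.card:ℝ) * (∑ i ∈ R, p i^2) - (∑ i ∈ R, p i)^2) := by
    have hrow : ∀ a ∈ R, ∑ b ∈ R, (p a - p b)^2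
        = (R.card:ℝ)*(p a)^2 - 2*(p a)*(∑ i ∈ R, p i) + ∑ i ∈ R, p i^2 := by
      intro a _
      have : ∀ b ∈ R, (p a - p b)^2 = p a^2 - 2*(p a)*(p b) + p b^2 := by
        intro b _; ring
      rw [Finset.sum_congr rfl this, Finset.sum_add_distrib, Finset.sum_sub_distrib,
        Finset.sum_const, ← Finset.mul_sum, nsmul_eq_mul]
    rw [Finset.sum_congr rfl hrow, Finset.sum_add_distrib, Finset.sum_sub_distrib,
      ← Finset.mul_sum, ← Finset.sum_mul, ← Finset.mul_sum, Finset.sum_const, nsmul_eq_mul]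
    ring
  have hsplit : ∑ a ∈ R, ∑ b ∈ R, (p a - p b)^2
      = 2 * ∑ ab ∈ (R ×ˢ R).filter (fun ab => ab.1 < ab.2), (p ab.1 - p ab.2)^2 := by
    rw [← Finset.sum_product' (f := fun a b => (p a - p b)^2)]
    rw [← Finset.sum_filter_add_sum_filter_not (R ×ˢ R) (fun ab => ab.1 < ab.2)]
    have h1 : ∑ ab ∈ (R ×ˢ R).filter (fun ab => ¬ ab.1 < ab.2), (p ab.1 - p ab.2)^2
        = ∑ ab ∈ (R ×ˢ R).filter (fun ab => ab.2 < ab.1), (p ab.1 - p ab.2)^2 := by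
      refine (Finset.sum_subset ?_ ?_).symm
      · intro ab hab
        simp only [Finset.mem_filter] at *
        exact ⟨hab.1, not_lt_of_gt hab.2⟩
      · intro ab hab hnab
        simp only [Finset.mem_filter] at *
        have : ab.1 = ab.2 := le_antisymm (not_lt.mp (fun h => hnab ⟨hab.1, h⟩)) (not_lt.mp hab.2)
        rw [this]; ring
    have h2 : ∑ ab ∈ (R ×ˢ R).filter (fun ab => ab.2 < ab.1), (p ab.1 - p ab.2)^2
        = ∑ ab ∈ (R ×ˢ R).filter (fun ab => ab.1 < ab.2), (p ab.1 - p ab.2)^2 := by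
      refine Finset.sum_nbij' (fun ab => (ab.2, ab.1)) (fun ab => (ab.2, ab.1)) ?_ ?_ ?_ ?_ ?_
      · intro ab hab; simp only [Finset.mem_filter, Finset.mem_product] at *
        exact ⟨⟨hab.1.2, hab.1.1⟩, hab.2⟩
      · intro ab hab; simp only [Finset.mem_filter, Finset.mem_product] at *
        exact ⟨⟨hab.1.2, hab.1.1⟩, hab.2⟩
      · intro ab _; rfl
      · intro ab _; rfl
      · intro ab _; ring
    rw [h1, h2]
    ring
  have := full.symm.trans hsplit
  linarith

lemma count_mem {N : ℕ} (i : Fin N) (m : ℕ) (hm : 1 ≤ m) :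
    (((Finset.univ : Finset (Fin N)).powersetCard m).filter (fun R => i ∈ R)).card
      = (N-1).choose (m-1) := by
  have hb : (((Finset.univ : Finset (Fin N)).powersetCard m).filter (fun R => i ∈ R)).card
      = (((Finset.univ : Finset (Fin N)).erase i).powersetCard (m-1)).card := by
    apply Finset.card_bij (fun R _ => R.erase i)
    · intro R hR
      simp only [Finset.mem_filter, Finset.mem_powersetCard] at hR
      rw [Finset.mem_powersetCard]
      exact ⟨Finset.erase_subset_erase i hR.1.1, by rw [Finset.card_erase_of_mem hR.2, hR.1.2]⟩
    · intro R hR S hS h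
      simp only [Finset.mem_filter] at hR hS
      rw [← Finset.insert_erase hR.2, ← Finset.insert_erase hS.2, h]
    · intro S hS
      rw [Finset.mem_powersetCard] at hS
      have hiS : i ∉ S := fun h => (Finset.notMem_erase i _) (hS.1 h)
      refine ⟨insert i S, ?_, ?_⟩
      · simp only [Finset.mem_filter, Finset.mem_powersetCard]
        refine ⟨⟨Finset.subset_univ _, ?_⟩, Finset.mem_insert_self i S⟩
        rw [Finset.card_insert_of_notMem hiS, hS.2]
        omega
      · exact Finset.erase_insert hiS
  rw [hb, Finset.card_powersetCard, Finset.card_erase_of_mem (Finset.mem_univ i),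
    Finset.card_univ, Fintype.card_fin]

/-- Pair-square expansion of the LRU hit rate:
`H_C(p) = C/N + Σ_{a<b} (p_a - p_b)² J_{ab}^{(C)}(p)` for every `p ∈ Δ_N°`. -/
theorem pair_square_expansion (N C : ℕ) (hN : 2 ≤ N) (hC1 : 1 ≤ C) (hCN : C < N)
    (p : Fin N → ℝ) (hppos : ∀ i, 0 < p i) (hpsum : ∑ i, p i = 1) :
    hitRate N C p =
      (C : ℝ) / N +
        ∑ ab ∈ (Finset.univ : Finset (Fin N × Fin N)).filter (fun ab => ab.1 < ab.2),
          (p ab.1 - p ab.2) ^ 2 * Jkernel N C ab.1 ab.2 p := by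
  have hL2 : 2 ≤ N - C + 1 := by omega
  have hN0 : (N : ℝ) ≠ 0 := Nat.cast_ne_zero.mpr (by omega)
  -- sum of p over all m-subsets
  have sumP : ∀ m, 1 ≤ m →
      ∑ R ∈ (Finset.univ : Finset (Fin N)).powersetCard m, (∑ i ∈ R, p i)
        = ((N-1).choose (m-1) : ℝ) := by
    intro m hm
    rw [Finset.sum_comm' (s' := fun i =>
        ((Finset.univ : Finset (Fin N)).powersetCard m).filter (fun R => i ∈ R))
      (t' := (Finset.univ : Finset (Fin N)))
      (fun R i => by simp [Finset.mem_filter, and_comm])]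
    simp only [Finset.sum_const, count_mem _ _ hm, nsmul_eq_mul]
    rw [← Finset.mul_sum, hpsum, mul_one]
  -- per-set decomposition
  have hdecomp : ∀ m ∈ Finset.Icc (N-C+1) N,
      ∀ R ∈ (Finset.univ : Finset (Fin N)).powersetCard m,
      (∑ i ∈ R, p i^2)/(∑ i ∈ R, p i)
      = (∑ i ∈ R, p i)/m
        + (∑ ab ∈ (R ×ˢ R).filter (fun ab => ab.1 < ab.2), (p ab.1 - p ab.2)^2)
            /(m * ∑ i ∈ R, p i) := by
    intro m hm R hR
    rw [Finset.mem_Icc] at hm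
    rw [Finset.mem_powersetCard] at hR
    have hcard : R.card = m := hR.2
    have hne : R.Nonempty := Finset.card_pos.mp (by omega)
    have hP : 0 < ∑ i ∈ R, p i := Finset.sum_pos (fun i _ => hppos i) hne
    have hs := sq_pair p R
    rw [hcard] at hs
    have hm0 : (m : ℝ) ≠ 0 := Nat.cast_ne_zero.mpr (by omega)
    have h2 : (∑ i ∈ R, p i)/(m:ℝ)
        + (∑ ab ∈ (R ×ˢ R).filter (fun ab => ab.1 < ab.2), (p ab.1 - p ab.2)^2)
            /(m * ∑ i ∈ R, p i)
        = ((∑ i ∈ R, p i)^2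
            + ∑ ab ∈ (R ×ˢ R).filter (fun ab => ab.1 < ab.2), (p ab.1 - p ab.2)^2)
            /((m:ℝ) * ∑ i ∈ R, p i) := by
      field_simp
    rw [h2, ← hs, mul_div_mul_left _ _ hm0]
  -- termwise split of the hit rate
  unfold hitRate
  have e1 : ∀ m ∈ Finset.Icc (N-C+1) N,
      (-1:ℝ)^(m-(N-C+1)) * ((m-2).choose (m-(N-C+1)):ℝ)
        * ∑ R ∈ (Finset.univ : Finset (Fin N)).powersetCard m,
            (∑ i ∈ R, p i^2)/(∑ i ∈ R, p i)
      = (-1:ℝ)^(m-(N-C+1)) * ((m-2).choose (m-(N-C+1)):ℝ)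
          * (((N-1).choose (m-1):ℝ)/m)
        + ∑ R ∈ (Finset.univ : Finset (Fin N)).powersetCard m,
            (-1:ℝ)^(m-(N-C+1)) * ((m-2).choose (m-(N-C+1)):ℝ)
              * ((∑ ab ∈ (R ×ˢ R).filter (fun ab => ab.1 < ab.2), (p ab.1 - p ab.2)^2)
                  /(m * ∑ i ∈ R, p i)) := by
    intro m hm
    rw [Finset.sum_congr rfl (hdecomp m hm), Finset.sum_add_distrib, mul_add]
    congr 1
    · rw [← Finset.sum_div, sumP m (by rw [Finset.mem_Icc] at hm; omega)]
    · rw [Finset.mul_sum]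
  rw [Finset.sum_congr rfl e1, Finset.sum_add_distrib]
  congr 1
  -- PART A : the constant term
  · have hA1 : ∀ m ∈ Finset.Icc (N-C+1) N,
        (-1:ℝ)^(m-(N-C+1)) * ((m-2).choose (m-(N-C+1)):ℝ) * (((N-1).choose (m-1):ℝ)/m)
        = ((-1:ℝ)^(m-(N-C+1)) * ((m-2).choose (m-(N-C+1)):ℝ) * ((N.choose m : ℝ)))/N := by
      intro m hm
      rw [Finset.mem_Icc] at hm
      have hm1 : 1 ≤ m := by omega
      have hnat : N * (N-1).choose (m-1) = N.choose m * m := by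
        have h := Nat.add_one_mul_choose_eq (N-1) (m-1)
        rw [show N-1+1 = N by omega, show m-1+1 = m by omega] at h
        exact h
      have hr : ((N-1).choose (m-1) : ℝ)/m = (N.choose m : ℝ)/N := by
        rw [div_eq_div_iff (Nat.cast_ne_zero.mpr (by omega)) hN0]
        have : ((N:ℝ)) * ((N-1).choose (m-1) : ℝ) = (N.choose m : ℝ) * m := by
          exact_mod_cast hnat
        linarith
      rw [hr]
      ring
    rw [Finset.sum_congr rfl hA1, ← Finset.sum_div]
    rw [div_eq_div_iff hN0 hN0]
    congr 1
    rw [show Finset.Icc (N-C+1) N = Finset.Ico (N-C+1) (N+1) from (Finset.Ico_add_one_right_eq_Icc _ _).symm,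
      Finset.sum_Ico_eq_sum_range, show N + 1 - (N-C+1) = C by omega]
    have hpt : ∀ k ∈ Finset.range C,
        (-1:ℝ)^((N-C+1+k)-(N-C+1)) * (((N-C+1+k)-2).choose ((N-C+1+k)-(N-C+1)):ℝ)
          * ((N.choose (N-C+1+k)) : ℝ)
        = (-1:ℝ)^k * (((N-C-1+k).choose k : ℕ):ℝ) * ((N.choose ((C-1)-k) : ℕ):ℝ) := by
      intro k hk
      rw [Finset.mem_range] at hk
      rw [show (N-C+1+k)-(N-C+1) = k by omega, show (N-C+1+k)-2 = N-C-1+k by omega]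
      congr 1
      rw [show N.choose (N-C+1+k) = N.choose (N - (N-C+1+k)) from
        (Nat.choose_symm (by omega)).symm, show N - (N-C+1+k) = C-1-k by omega]
    rw [Finset.sum_congr rfl hpt]
    have hkey := key_binom N (N-C-1) (C-1) (by omega)
    rw [show C-1+1 = C by omega] at hkey
    have : (∑ k ∈ Finset.range C, (-1:ℝ)^k * (((N-C-1+k).choose k : ℕ):ℝ)
        * ((N.choose ((C-1)-k) : ℕ):ℝ)) = ((N-(N-C-1)-1).choose (C-1) : ℤ) := by
      rw [← hkey]
      push_cast
      rfl
    rw [this, show N-(N-C-1)-1 = C by omega, show Nat.choose C (C-1) = C by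
      rw [← Nat.choose_symm (by omega : C-1 ≤ C), show C - (C-1) = 1 by omega,
        Nat.choose_one_right]]
    push_cast
    ring
  -- PART B : the pair term
  · -- replace m by R.card inside
    have hB1 : ∀ m ∈ Finset.Icc (N-C+1) N,
        ∑ R ∈ (Finset.univ : Finset (Fin N)).powersetCard m,
            (-1:ℝ)^(m-(N-C+1)) * ((m-2).choose (m-(N-C+1)):ℝ)
              * ((∑ ab ∈ (R ×ˢ R).filter (fun ab => ab.1 < ab.2), (p ab.1 - p ab.2)^2)
                  /(m * ∑ i ∈ R, p i))
        = ∑ R ∈ (Finset.univ : Finset (Fin N)).powersetCard m,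
            ∑ ab ∈ (R ×ˢ R).filter (fun ab => ab.1 < ab.2),
              ((-1:ℝ)^(R.card-(N-C+1)) * ((R.card-2).choose (R.card-(N-C+1)):ℝ)
                /((R.card : ℝ) * ∑ i ∈ R, p i)) * (p ab.1 - p ab.2)^2 := by
      intro m hm
      refine Finset.sum_congr rfl ?_
      intro R hR
      rw [(Finset.mem_powersetCard.mp hR).2, ← Finset.mul_sum]
      ring
    rw [Finset.sum_congr rfl hB1]
    -- collapse the double (m, R) sum into a sum over large subsets
    rw [Finset.sum_comm' (s' := fun (R : Finset (Fin N)) => ({R.card} : Finset ℕ))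
      (t' := (Finset.univ : Finset (Fin N)).powerset.filter (fun R => N-C+1 ≤ R.card))
      (fun m R => by
        simp only [Finset.mem_Icc, Finset.mem_powersetCard, Finset.mem_singleton,
          Finset.mem_filter, Finset.mem_powerset]
        constructor
        · rintro ⟨⟨h1, h2⟩, h3, h4⟩
          exact ⟨h4.symm, h3, by omega⟩
        · rintro ⟨h1, h2, h3⟩
          have hle : R.card ≤ N := by
            simpa using Finset.card_le_univ R
          exact ⟨⟨by omega, by omega⟩, h2, h1.symm⟩)]
    simp only [Finset.sum_singleton]
    -- swap subset and pair sums
    rw [Finset.sum_comm' (s' := fun (ab : Fin N × Fin N) =>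
        (Finset.univ : Finset (Fin N)).powerset.filter
          (fun R => ab.1 ∈ R ∧ ab.2 ∈ R ∧ N-C+1 ≤ R.card))
      (t' := (Finset.univ : Finset (Fin N × Fin N)).filter (fun ab => ab.1 < ab.2))
      (fun R ab => by
        simp only [Finset.mem_filter, Finset.mem_powerset, Finset.mem_product,
          Finset.mem_univ, true_and]
        tauto)]
    refine Finset.sum_congr rfl ?_
    intro ab hab
    rw [← Finset.sum_mul, mul_comm]
    congr 1
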